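/- Let p > 0 be a real number, let n ≥ 5, and let (p_{ij}) be an n×n symmetric matrix with positive entries such that (p_{ij}·p_{kl})^{1/p} ≤ (p_{ik}·p_{jl})^{1/p} + (p_{il}·p_{jk})^{1/p} for all indices i, j, k, l in {1,…,n}. Then (p_{12}·p_{13}·p_{23}·p_{44}·p_{45}·p_{55})/(p_{14}·p_{15}·p_{24}·p_{25}·p_{34}·p_{35}) ≤ 8^p, and the constant 8^p cannot be replaced by any smaller constant. -/
import Mathlib

open Real

-- auxiliary upper-bound lemma
theorem penta_aux (p : ℝ) (hp : 0 < p) (n : ℕ) (M : Matrix (Fin n) (Fin n) ℝ)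
    (hpos : ∀ i j, 0 < M i j)
    (hptol : ∀ i j k l : Fin n, (M i j * M k l) ^ (1/p) ≤
        (M i k * M j l) ^ (1/p) + (M i l * M j k) ^ (1/p))
    (a b c d e : Fin n) :
    (M a b * M a c * M b c * M d d * M d e * M e e) /
      (M a d * M a e * M b d * M b e * M c d * M c e) ≤ (8:ℝ) ^ p := by
  have hpne : p ≠ 0 := ne_of_gt hp
  set q : Fin n → Fin n → ℝ := fun i j => (M i j) ^ (1/p) with hqdef
  have hq : ∀ i j, 0 < q i j := fun i j => Real.rpow_pos_of_pos (hpos i j) _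
  have key : ∀ i j k l : Fin n, q i j * q k l ≤ q i k * q j l + q i l * q j k := by
    intro i j k l
    have h := hptol i j k l
    rwa [Real.mul_rpow (hpos _ _).le (hpos _ _).le,
         Real.mul_rpow (hpos _ _).le (hpos _ _).le,
         Real.mul_rpow (hpos _ _).le (hpos _ _).le] at h
  have hMq : ∀ i j, M i j = q i j ^ p := by
    intro i j
    rw [hqdef]
    simp only [one_div]
    rw [Real.rpow_inv_rpow (hpos i j).le hpne]
  have hmain : q a b * q a c * q b c * q d d * q d e * q e e ≤
      8 * (q a d * q a e * q b d * q b e * q c d * q c e) := by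
    rcases le_total (q b d * q c e) (q c d * q b e) with h | h
    · have h1 : q a b * q d d ≤ 2 * (q a d * q b d) := by nlinarith [key a b d d]
      have h2 : q a c * q e e ≤ 2 * (q a e * q c e) := by nlinarith [key a c e e]
      have h3 : q b c * q d e ≤ 2 * (q c d * q b e) := by nlinarith [key b c d e]
      have m1 : (q a b * q d d) * (q a c * q e e) ≤
          (2 * (q a d * q b d)) * (2 * (q a e * q c e)) :=
        mul_le_mul h1 h2 (mul_pos (hq a c) (hq e e)).le
          (by nlinarith [mul_pos (hq a d) (hq b d)])
      have m2 : ((q a b * q d d) * (q a c * q e e)) * (q b c * q d e) ≤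
          ((2 * (q a d * q b d)) * (2 * (q a e * q c e))) * (2 * (q c d * q b e)) :=
        mul_le_mul m1 h3 (mul_pos (hq b c) (hq d e)).le
          (by nlinarith [mul_pos (mul_pos (hq a d) (hq b d)) (mul_pos (hq a e) (hq c e))])
      calc q a b * q a c * q b c * q d d * q d e * q e e
          = ((q a b * q d d) * (q a c * q e e)) * (q b c * q d e) := by ring
        _ ≤ ((2 * (q a d * q b d)) * (2 * (q a e * q c e))) * (2 * (q c d * q b e)) := m2
        _ = 8 * (q a d * q a e * q b d * q b e * q c d * q c e) := by ring
    · have h1 : q a b * q e e ≤ 2 * (q a e * q b e) := by nlinarith [key a b e e]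
      have h2 : q a c * q d d ≤ 2 * (q a d * q c d) := by nlinarith [key a c d d]
      have h3 : q b c * q d e ≤ 2 * (q b d * q c e) := by nlinarith [key b c d e]
      have m1 : (q a b * q e e) * (q a c * q d d) ≤
          (2 * (q a e * q b e)) * (2 * (q a d * q c d)) :=
        mul_le_mul h1 h2 (mul_pos (hq a c) (hq d d)).le
          (by nlinarith [mul_pos (hq a e) (hq b e)])
      have m2 : ((q a b * q e e) * (q a c * q d d)) * (q b c * q d e) ≤
          ((2 * (q a e * q b e)) * (2 * (q a d * q c d))) * (2 * (q b d * q c e)) :=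
        mul_le_mul m1 h3 (mul_pos (hq b c) (hq d e)).le
          (by nlinarith [mul_pos (mul_pos (hq a e) (hq b e)) (mul_pos (hq a d) (hq c d))])
      calc q a b * q a c * q b c * q d d * q d e * q e e
          = ((q a b * q e e) * (q a c * q d d)) * (q b c * q d e) := by ring
        _ ≤ ((2 * (q a e * q b e)) * (2 * (q a d * q c d))) * (2 * (q b d * q c e)) := m2
        _ = 8 * (q a d * q a e * q b d * q b e * q c d * q c e) := by ring
  have hDpos : 0 < M a d * M a e * M b d * M b e * M c d * M c e :=
    mul_pos (mul_pos (mul_pos (mul_pos (mul_pos (hpos a d) (hpos a e)) (hpos b d))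
      (hpos b e)) (hpos c d)) (hpos c e)
  rw [div_le_iff₀ hDpos]
  have conv6 : ∀ x1 x2 x3 x4 x5 x6 : ℝ, 0 < x1 → 0 < x2 → 0 < x3 → 0 < x4 → 0 < x5 → 0 < x6 →
      x1^p * x2^p * x3^p * x4^p * x5^p * x6^p = (x1*x2*x3*x4*x5*x6)^p := by
    intro x1 x2 x3 x4 x5 x6 h1 h2 h3 h4 h5 h6
    rw [← Real.mul_rpow h1.le h2.le, ← Real.mul_rpow (by positivity) h3.le,
        ← Real.mul_rpow (by positivity) h4.le, ← Real.mul_rpow (by positivity) h5.le,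
        ← Real.mul_rpow (by positivity) h6.le]
  have hNq : (0:ℝ) ≤ q a b * q a c * q b c * q d d * q d e * q e e :=
    (mul_pos (mul_pos (mul_pos (mul_pos (mul_pos (hq a b) (hq a c)) (hq b c))
      (hq d d)) (hq d e)) (hq e e)).le
  have hDq : (0:ℝ) ≤ q a d * q a e * q b d * q b e * q c d * q c e :=
    (mul_pos (mul_pos (mul_pos (mul_pos (mul_pos (hq a d) (hq a e)) (hq b d))
      (hq b e)) (hq c d)) (hq c e)).le
  calc M a b * M a c * M b c * M d d * M d e * M e e
      = (q a b * q a c * q b c * q d d * q d e * q e e) ^ p := by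
        rw [hMq a b, hMq a c, hMq b c, hMq d d, hMq d e, hMq e e,
          conv6 _ _ _ _ _ _ (hq a b) (hq a c) (hq b c) (hq d d) (hq d e) (hq e e)]
    _ ≤ (8 * (q a d * q a e * q b d * q b e * q c d * q c e)) ^ p :=
        Real.rpow_le_rpow hNq hmain hp.le
    _ = 8^p * (M a d * M a e * M b d * M b e * M c d * M c e) := by
        rw [Real.mul_rpow (by norm_num) hDq,
          hMq a d, hMq a e, hMq b d, hMq b e, hMq c d, hMq c e,
          conv6 _ _ _ _ _ _ (hq a d) (hq a e) (hq b d) (hq b e) (hq c d) (hq c e)]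

noncomputable def pentaM (p : ℝ) (n : ℕ) : Matrix (Fin n) (Fin n) ℝ :=
  fun i j => if (i.val = 3 ∨ i.val = 4) ∧ (j.val = 3 ∨ j.val = 4) then (2:ℝ)^p else 1

noncomputable def pentaQ (n : ℕ) (i j : Fin n) : ℝ :=
  if (i.val = 3 ∨ i.val = 4) ∧ (j.val = 3 ∨ j.val = 4) then (2:ℝ) else 1

theorem pentaM_eq (p : ℝ) (n : ℕ) (i j : Fin n) : pentaM p n i j = (pentaQ n i j) ^ p := by
  unfold pentaM pentaQ
  split <;> simp

theorem pentaM_symm (p : ℝ) (n : ℕ) : (pentaM p n).IsSymm := by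
  unfold Matrix.IsSymm
  ext i j
  simp only [Matrix.transpose_apply, pentaM]
  exact if_congr (by tauto) rfl rfl

theorem pentaM_pos (p : ℝ) (n : ℕ) : ∀ i j, 0 < pentaM p n i j := by
  intro i j
  unfold pentaM
  split
  · exact Real.rpow_pos_of_pos (by norm_num) _
  · norm_num

theorem pentaQ_ptol (n : ℕ) (i j k l : Fin n) :
    pentaQ n i j * pentaQ n k l ≤ pentaQ n i k * pentaQ n j l + pentaQ n i l * pentaQ n j k := by
  unfold pentaQ
  by_cases hi : i.val = 3 ∨ i.val = 4 <;> by_cases hj : j.val = 3 ∨ j.val = 4 <;>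
    by_cases hk : k.val = 3 ∨ k.val = 4 <;> by_cases hl : l.val = 3 ∨ l.val = 4 <;>
    simp [hi, hj, hk, hl] <;> norm_num

theorem pentaM_ptol (p : ℝ) (hp : 0 < p) (n : ℕ) :
    ∀ i j k l : Fin n, (pentaM p n i j * pentaM p n k l) ^ (1/p) ≤
      (pentaM p n i k * pentaM p n j l) ^ (1/p) + (pentaM p n i l * pentaM p n j k) ^ (1/p) := by
  intro i j k l
  have hpne : p ≠ 0 := ne_of_gt hp
  have hQ : ∀ a b : Fin n, 0 < pentaQ n a b := by
    intro a b; unfold pentaQ; split <;> norm_num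
  have key : ∀ a b c d : Fin n,
      (pentaM p n a b * pentaM p n c d) ^ (1/p) = pentaQ n a b * pentaQ n c d := by
    intro a b c d
    rw [pentaM_eq, pentaM_eq, ← Real.mul_rpow (hQ a b).le (hQ c d).le, one_div,
      Real.rpow_rpow_inv (mul_pos (hQ a b) (hQ c d)).le hpne]
  rw [key, key, key]
  exact pentaQ_ptol n i j k l

theorem pentagonal_ratio_Tp (p : ℝ) (hp : 0 < p) (n : ℕ) (hn : 5 ≤ n) :
    (∀ M : Matrix (Fin n) (Fin n) ℝ, M.IsSymm → (∀ i j, 0 < M i j) →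
      (∀ i j k l : Fin n, (M i j * M k l) ^ (1/p) ≤
          (M i k * M j l) ^ (1/p) + (M i l * M j k) ^ (1/p)) →
      (M ⟨0, by omega⟩ ⟨1, by omega⟩ * M ⟨0, by omega⟩ ⟨2, by omega⟩ *
        M ⟨1, by omega⟩ ⟨2, by omega⟩ * M ⟨3, by omega⟩ ⟨3, by omega⟩ *
        M ⟨3, by omega⟩ ⟨4, by omega⟩ * M ⟨4, by omega⟩ ⟨4, by omega⟩) /
      (M ⟨0, by omega⟩ ⟨3, by omega⟩ * M ⟨0, by omega⟩ ⟨4, by omega⟩ *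
        M ⟨1, by omega⟩ ⟨3, by omega⟩ * M ⟨1, by omega⟩ ⟨4, by omega⟩ *
        M ⟨2, by omega⟩ ⟨3, by omega⟩ * M ⟨2, by omega⟩ ⟨4, by omega⟩) ≤ (8:ℝ) ^ p) ∧
    (∀ c : ℝ, c < (8:ℝ) ^ p → ∃ M : Matrix (Fin n) (Fin n) ℝ, M.IsSymm ∧
      (∀ i j, 0 < M i j) ∧
      (∀ i j k l : Fin n, (M i j * M k l) ^ (1/p) ≤
          (M i k * M j l) ^ (1/p) + (M i l * M j k) ^ (1/p)) ∧
      c < (M ⟨0, by omega⟩ ⟨1, by omega⟩ * M ⟨0, by omega⟩ ⟨2, by omega⟩ *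
            M ⟨1, by omega⟩ ⟨2, by omega⟩ * M ⟨3, by omega⟩ ⟨3, by omega⟩ *
            M ⟨3, by omega⟩ ⟨4, by omega⟩ * M ⟨4, by omega⟩ ⟨4, by omega⟩) /
          (M ⟨0, by omega⟩ ⟨3, by omega⟩ * M ⟨0, by omega⟩ ⟨4, by omega⟩ *
            M ⟨1, by omega⟩ ⟨3, by omega⟩ * M ⟨1, by omega⟩ ⟨4, by omega⟩ *
            M ⟨2, by omega⟩ ⟨3, by omega⟩ * M ⟨2, by omega⟩ ⟨4, by omega⟩)) := by
  constructor
  · intro M hsymm hpos hptol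
    exact penta_aux p hp n M hpos hptol _ _ _ _ _
  · intro c hc
    refine ⟨pentaM p n, pentaM_symm p n, pentaM_pos p n, pentaM_ptol p hp n, ?_⟩
    have h8 : (2:ℝ)^p * (2:ℝ)^p * (2:ℝ)^p = (8:ℝ)^p := by
      rw [← Real.mul_rpow (by norm_num) (by norm_num),
          ← Real.mul_rpow (by norm_num) (by norm_num)]
      norm_num
    simp only [pentaM]
    norm_num
    linarith
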